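/- Let S_1, ..., S_{N'} be exchangeable real random variables together with a test score S, all distinct almost surely. For α ∈ (0,1), let q̂ = S_{(⌈(N'+1)α⌉)} be the ⌈(N'+1)α⌉-th smallest value among {S_1, ..., S_{N'}, +∞}. Then Pr(S ≤ q̂) = ⌈(N'+1)α⌉ / (N'+1) whenever ⌈(N'+1)α⌉ ≤ N', and Pr(S ≤ q̂) = 1 otherwise. -/

import Mathlib

open MeasureTheory ProbabilityTheory

open scoped ENNReal

section Helpers
open Finset
open Finset

lemma card_filter_comp_perm {n : ℕ} (σ : Equiv.Perm (Fin n)) (p : Fin n → Prop) [DecidablePred p] :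
    ((univ : Finset (Fin n)).filter fun i => p (σ i)).card = (univ.filter p).card := by
  apply Finset.card_bij' (fun i _ => σ i) (fun i _ => σ.symm i) <;> simp

lemma le_monotone_iff_card {n m : ℕ} (hm : m < n) {w : Fin n → EReal} (hw : Monotone w)
    (x : EReal) :
    x ≤ w ⟨m, hm⟩ ↔ ((univ : Finset (Fin n)).filter fun i => w i < x).card ≤ m := by
  set m' : Fin n := ⟨m, hm⟩ with hm'
  have hmm : (m' : ℕ) = m := rfl
  rw [← hmm]
  constructor
  · intro h
    calc (univ.filter fun i => w i < x).card
        ≤ (Finset.Iio m').card := by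
          apply Finset.card_le_card
          intro i hi
          simp only [Finset.mem_filter, Finset.mem_univ, true_and, Finset.mem_Iio] at *
          by_contra hmi
          exact absurd (lt_of_lt_of_le hi h) (not_lt.2 (hw (not_lt.1 hmi)))
      _ = m' := Fin.card_Iio m'
  · intro h
    by_contra hx
    push_neg at hx
    have hsub : Finset.Iic m' ⊆ univ.filter fun i => w i < x := by
      intro i hi
      simp only [Finset.mem_Iic] at hi
      simp only [Finset.mem_filter, Finset.mem_univ, true_and]
      exact lt_of_le_of_lt (hw hi) hx
    have := Finset.card_le_card hsub
    rw [Fin.card_Iic] at this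
    omega

lemma measurable_rank {n : ℕ} (j : Fin n) :
    Measurable fun v : Fin n → ℝ => ((univ : Finset (Fin n)).filter fun i => v i ≤ v j).card := by
  have h : (fun v : Fin n → ℝ => (univ.filter fun i => v i ≤ v j).card)
      = fun v => ∑ i, if v i ≤ v j then 1 else 0 := by
    funext v; rw [Finset.card_filter]
  rw [h]
  exact Finset.measurable_sum _ fun i _ =>
    Measurable.ite (measurableSet_le (measurable_pi_apply i) (measurable_pi_apply j))
      measurable_const measurable_const

lemma card_rank_le {n : ℕ} {v : Fin n → ℝ} (hv : Function.Injective v) {k : ℕ} (hk : k ≤ n) :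
    ((univ : Finset (Fin n)).filter fun j =>
      (univ.filter fun i => v i ≤ v j).card ≤ k).card = k := by
  set R : Fin n → ℕ := fun j => (univ.filter fun i => v i ≤ v j).card with hR
  have hmono : ∀ {j j'}, v j < v j' → R j < R j' := by
    intro j j' hlt
    apply Finset.card_lt_card
    constructor
    · intro i hi
      simp only [Finset.mem_filter, Finset.mem_univ, true_and] at *
      exact hi.trans hlt.le
    · intro hsub
      have : j' ∈ univ.filter fun i => v i ≤ v j' := by simp
      have := hsub this
      simp only [Finset.mem_filter, Finset.mem_univ, true_and] at this
      exact absurd this (not_le.2 hlt)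
  have hinj : Function.Injective R := by
    intro j j' hjj
    by_contra hne
    rcases lt_or_gt_of_ne (fun h => hne (hv h)) with h | h
    · exact absurd hjj (Nat.ne_of_lt (hmono h))
    · exact absurd hjj.symm (Nat.ne_of_lt (hmono h))
  have himg : univ.image R = Finset.Icc 1 n := by
    apply Finset.eq_of_subset_of_card_le
    · intro m hm
      simp only [Finset.mem_image, Finset.mem_univ, true_and] at hm
      obtain ⟨j, rfl⟩ := hm
      simp only [Finset.mem_Icc]
      constructor
      · have : j ∈ univ.filter fun i => v i ≤ v j := by simp
        exact Finset.card_pos.2 ⟨j, this⟩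
      · calc R j ≤ (univ : Finset (Fin n)).card := Finset.card_le_card (Finset.filter_subset _ _)
          _ = n := Finset.card_univ.trans (Fintype.card_fin n)
    · rw [Nat.card_Icc, Finset.card_image_of_injective _ hinj]
      simp
  calc (univ.filter fun j => R j ≤ k).card
      = ((univ.filter fun j => R j ≤ k).image R).card :=
        (Finset.card_image_of_injective _ hinj).symm
    _ = ((univ.image R).filter (· ≤ k)).card := by
        rw [Finset.filter_image]
    _ = ((Finset.Icc 1 n).filter (· ≤ k)).card := by rw [himg]
    _ = (Finset.Icc 1 k).card := by
        congr 1; ext m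
        simp only [Finset.mem_filter, Finset.mem_Icc]
        omega
    _ = k := by rw [Nat.card_Icc]; omega

lemma card_filter_snoc {n : ℕ} {β : Type*} (v : Fin n → β) (x : β) (p : β → Prop)
    [DecidablePred p] :
    ((univ : Finset (Fin (n+1))).filter fun i => p ((Fin.snoc v x : Fin (n+1) → β) i)).card
      = (univ.filter fun i : Fin n => p (v i)).card + (if p x then 1 else 0) := by
  rw [Finset.card_filter, Finset.card_filter, Fin.sum_univ_castSucc]
  simp [Fin.snoc_castSucc, Fin.snoc_last]
end Helpers

/-- The `k`-th smallest value (1-indexed) of a finite tuple in a linear order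
(junk value `⊤` if out of range). -/
noncomputable def orderStatE {n : ℕ} (v : Fin n → EReal) (k : ℕ) : EReal :=
  if h : k - 1 < n then v (Tuple.sort v ⟨k - 1, h⟩) else ⊤

/-- Finite-sample coverage of split conformal prediction: if the calibration scores
`S_1, …, S_{N'}` and the test score `S` are exchangeable and a.s. distinct, and
`q̂` is the `⌈(N'+1)α⌉`-th smallest value among `{S_1, …, S_{N'}, +∞}`, then
`Pr(S ≤ q̂) = ⌈(N'+1)α⌉/(N'+1)` when `⌈(N'+1)α⌉ ≤ N'`, and `Pr(S ≤ q̂) = 1` otherwise. -/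
theorem conformal_coverage
    {Ω : Type*} [MeasurableSpace Ω] (μ : Measure Ω) [IsProbabilityMeasure μ]
    (N' : ℕ) (hN' : 0 < N') (V : Fin N' → Ω → ℝ) (S : Ω → ℝ)
    (hV : ∀ i, Measurable (V i)) (hS : Measurable S)
    (W : Fin (N' + 1) → Ω → ℝ) (hW : W = Fin.snoc V S)
    (hexch : ∀ π : Equiv.Perm (Fin (N' + 1)),
      μ.map (fun ω => fun i => W i ω) = μ.map (fun ω => fun i => W (π i) ω))
    (hdist : ∀ᵐ ω ∂μ, Function.Injective (fun i => W i ω))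
    (α : ℝ) (hα : α ∈ Set.Ioo (0 : ℝ) 1)
    (qhat : Ω → EReal)
    (hqhat : ∀ ω, qhat ω = orderStatE
      (Fin.snoc (fun i => ((V i ω : ℝ) : EReal)) (⊤ : EReal)) ⌈((N' : ℝ) + 1) * α⌉₊) :
    (⌈((N' : ℝ) + 1) * α⌉₊ ≤ N' →
      μ {ω | (S ω : EReal) ≤ qhat ω} =
        ENNReal.ofReal ((⌈((N' : ℝ) + 1) * α⌉₊ : ℝ) / ((N' : ℝ) + 1))) ∧
    (N' < ⌈((N' : ℝ) + 1) * α⌉₊ → μ {ω | (S ω : EReal) ≤ qhat ω} = 1) := by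
  classical
  obtain ⟨hα0, hα1⟩ := hα
  set k := ⌈((N' : ℝ) + 1) * α⌉₊ with hkdef
  have hk1 : 1 ≤ k := by
    rw [hkdef, Nat.one_le_iff_ne_zero, ne_eq, Nat.ceil_eq_zero, not_le]
    positivity
  have hkn : k ≤ N' + 1 := by
    rw [hkdef, Nat.ceil_le]
    push_cast
    nlinarith
  subst hW
  have hWm : ∀ i : Fin (N' + 1),
      Measurable fun ω => (Fin.snoc V S : Fin (N' + 1) → Ω → ℝ) i ω := by
    intro i
    induction i using Fin.lastCases with
    | last => simpa [Fin.snoc_last] using hS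
    | cast i => simpa [Fin.snoc_castSucc] using hV i
  set f : Ω → Fin (N' + 1) → ℝ :=
    fun ω i => (Fin.snoc V S : Fin (N' + 1) → Ω → ℝ) i ω with hfdef
  have hfm : Measurable f := measurable_pi_lambda _ hWm
  set A : Fin (N' + 1) → Set Ω := fun j =>
    f ⁻¹' {v | (Finset.univ.filter fun i => v i ≤ v j).card ≤ k} with hAdef
  have hBm : ∀ j : Fin (N' + 1),
      MeasurableSet {v : Fin (N' + 1) → ℝ |
        (Finset.univ.filter fun i => v i ≤ v j).card ≤ k} := by
    intro j
    exact measurable_rank j measurableSet_Iic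
  have hAm : ∀ j, MeasurableSet (A j) := fun j => hfm (hBm j)
  -- exchangeability step
  have hAeq : ∀ j, μ (A j) = μ (A (Fin.last N')) := by
    intro j
    set π : Equiv.Perm (Fin (N' + 1)) := Equiv.swap j (Fin.last N') with hπ
    have hfπm : Measurable fun ω => fun i =>
        (Fin.snoc V S : Fin (N' + 1) → Ω → ℝ) (π i) ω :=
      measurable_pi_lambda _ fun i => hWm (π i)
    have h1 : μ (A j)
        = μ.map f {v | (Finset.univ.filter fun i => v i ≤ v j).card ≤ k} :=
      (Measure.map_apply hfm (hBm j)).symm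
    rw [hexch π] at h1
    rw [Measure.map_apply hfπm (hBm j)] at h1
    rw [h1]
    congr 1
    ext ω
    simp only [Set.mem_preimage, Set.mem_setOf_eq, hAdef, hfdef]
    have hπj : π j = Fin.last N' := Equiv.swap_apply_left _ _
    simp only [hπj]
    rw [card_filter_comp_perm π
      (fun i => (Fin.snoc V S : Fin (N' + 1) → Ω → ℝ) i ω
        ≤ (Fin.snoc V S : Fin (N' + 1) → Ω → ℝ) (Fin.last N') ω)]
  -- the sum of rank-event probabilities is k
  have hsum : ∑ j : Fin (N' + 1), μ (A j) = (k : ℝ≥0∞) := by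
    have h2 : ∀ᵐ ω ∂μ, ∑ j : Fin (N' + 1),
        (A j).indicator (1 : Ω → ℝ≥0∞) ω = (k : ℝ≥0∞) := by
      filter_upwards [hdist] with ω hinj
      have hcount := card_rank_le hinj hkn
      simp only [Set.indicator_apply, hAdef, hfdef, Set.mem_preimage,
        Set.mem_setOf_eq, Pi.one_apply]
      rw [Finset.sum_boole]
      exact_mod_cast hcount
    calc ∑ j : Fin (N' + 1), μ (A j)
        = ∫⁻ ω, ∑ j : Fin (N' + 1), (A j).indicator (1 : Ω → ℝ≥0∞) ω ∂μ := by
          rw [lintegral_finset_sum _ (fun j _ => measurable_one.indicator (hAm j))]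
          exact Finset.sum_congr rfl fun j _ => (lintegral_indicator_one (hAm j)).symm
      _ = ∫⁻ _, (k : ℝ≥0∞) ∂μ := lintegral_congr_ae h2
      _ = (k : ℝ≥0∞) := by simp
  have hlast : μ (A (Fin.last N')) = (k : ℝ≥0∞) / ((N' : ℝ≥0∞) + 1) := by
    have h3 : ((N' : ℝ≥0∞) + 1) * μ (A (Fin.last N')) = (k : ℝ≥0∞) := by
      rw [← hsum, Finset.sum_congr rfl (fun j _ => hAeq j), Finset.sum_const,
        Finset.card_univ, Fintype.card_fin, nsmul_eq_mul]
      push_cast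
      ring
    have hcast : ((N' : ℝ≥0∞) + 1) = ((N' + 1 : ℕ) : ℝ≥0∞) := by push_cast; ring
    rw [ENNReal.eq_div_iff (by rw [hcast]; exact Nat.cast_ne_zero.mpr (by omega))
      (by rw [hcast]; exact ENNReal.natCast_ne_top _)]
    exact h3
  constructor
  · intro hle
    have hael : {ω | (S ω : EReal) ≤ qhat ω} =ᵐ[μ] A (Fin.last N') := by
      rw [Filter.eventuallyEq_set]
      filter_upwards [hdist] with ω hinj
      simp only [Set.mem_setOf_eq, Set.mem_preimage, hAdef]
      set u : Fin (N' + 1) → EReal :=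
        Fin.snoc (fun i => ((V i ω : ℝ) : EReal)) ⊤ with hu
      have hku : k - 1 < N' + 1 := by omega
      have hq : qhat ω = u (Tuple.sort u ⟨k - 1, hku⟩) := by
        rw [hqhat ω, orderStatE, dif_pos hku]
      have hB := le_monotone_iff_card hku (Tuple.monotone_sort u) ((S ω : ℝ) : EReal)
      simp only [Function.comp] at hB
      have hC := card_filter_comp_perm (Tuple.sort u)
        (fun i => u i < ((S ω : ℝ) : EReal))
      have hVne : ∀ i : Fin N', V i ω ≠ S ω := by
        intro i h
        have h5 : (fun j => (Fin.snoc V S : Fin (N' + 1) → Ω → ℝ) j ω) (Fin.castSucc i)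
            = (fun j => (Fin.snoc V S : Fin (N' + 1) → Ω → ℝ) j ω) (Fin.last N') := by
          simp only [Fin.snoc_castSucc, Fin.snoc_last]
          exact h
        exact absurd (hinj h5) (Fin.ne_of_lt (Fin.castSucc_lt_last i))
      have hD : (Finset.univ.filter fun i => u i < ((S ω : ℝ) : EReal)).card
          = (Finset.univ.filter fun i : Fin N' => V i ω < S ω).card := by
        rw [hu, card_filter_snoc (fun i => ((V i ω : ℝ) : EReal)) ⊤
          (fun y => y < ((S ω : ℝ) : EReal))]
        simp [EReal.coe_lt_coe_iff, not_top_lt]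
      have hE : (Finset.univ.filter fun i => f ω i ≤ f ω (Fin.last N')).card
          = (Finset.univ.filter fun i : Fin N' => V i ω < S ω).card + 1 := by
        have hlastval : f ω (Fin.last N') = S ω := by
          simp only [hfdef]
          rw [Fin.snoc_last]
        calc (Finset.univ.filter fun i => f ω i ≤ f ω (Fin.last N')).card
            = (Finset.univ.filter fun i =>
                ((Fin.snoc V S : Fin (N' + 1) → Ω → ℝ) i) ω ≤ S ω).card := by
              simp_rw [hlastval]
              rfl
          _ = (Finset.univ.filter fun i : Fin N' => V i ω ≤ S ω).card
              + (if S ω ≤ S ω then 1 else 0) :=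
              card_filter_snoc V S (fun g => g ω ≤ S ω)
          _ = (Finset.univ.filter fun i : Fin N' => V i ω < S ω).card + 1 := by
              rw [if_pos le_rfl]
              have hfe : (Finset.univ.filter fun i : Fin N' => V i ω ≤ S ω)
                  = Finset.univ.filter fun i : Fin N' => V i ω < S ω := by
                apply Finset.filter_congr
                intro i _
                exact ⟨fun h => lt_of_le_of_ne h (hVne i), le_of_lt⟩
              rw [hfe]
      rw [hq, hB, hC, hD, hE]
      omega
    rw [measure_congr hael, hlast]
    rw [ENNReal.ofReal_div_of_pos (by positivity), ENNReal.ofReal_natCast]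
    congr 1
    rw [show ((N' : ℝ) + 1) = ((N' + 1 : ℕ) : ℝ) by push_cast; ring,
      ENNReal.ofReal_natCast]
    push_cast
    ring
  · intro hlt
    have hk' : k = N' + 1 := le_antisymm hkn hlt
    have hq : ∀ ω, qhat ω = ⊤ := by
      intro ω
      rw [hqhat ω, hk', orderStatE]
      have h : N' + 1 - 1 < N' + 1 := by omega
      rw [dif_pos h]
      set u : Fin (N' + 1) → EReal :=
        Fin.snoc (fun i => ((V i ω : ℝ) : EReal)) ⊤ with hu
      have hmono := Tuple.monotone_sort u
      have htop : u (Fin.last N') = ⊤ := Fin.snoc_last _ _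
      apply top_unique
      calc (⊤ : EReal) = u (Fin.last N') := htop.symm
        _ = (u ∘ Tuple.sort u) ((Tuple.sort u).symm (Fin.last N')) := by
            simp [Function.comp]
        _ ≤ (u ∘ Tuple.sort u) (Fin.last N') := hmono (Fin.le_last _)
        _ = u (Tuple.sort u ⟨N' + 1 - 1, h⟩) := rfl
    have heq : {ω | (S ω : EReal) ≤ qhat ω} = Set.univ := by
      ext ω
      simp [hq ω, le_top]
    rw [heq, measure_univ]
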